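/- Let X_1,...,X_q be independent random variables in [0,1] and X = X_1+...+X_q. Suppose γ ∈ (0,1/2) and E[X] = (1-γ)·A + γ·B for some A, B ≥ 0. Then Pr[X < (1-2γ)·A] ≤ exp(-(γ³/2)·max(B, A/2)). -/

import Mathlib

open MeasureTheory ProbabilityTheory

lemma exp_neg_le_quadratic {x : ℝ} (hx : 0 ≤ x) :
    Real.exp (-x) ≤ 1 - x + x^2/2 := by
  have h1 : (0:ℝ) < 1 - x + x^2/2 := by nlinarith
  have h2 : 1 + x + x^2/2 ≤ Real.exp x := by
    have := Real.sum_le_exp_of_nonneg hx 3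
    simp [Finset.sum_range_succ, Nat.factorial] at this
    linarith
  have key : 1 ≤ (1 - x + x^2/2) * Real.exp x := by
    nlinarith [mul_le_mul_of_nonneg_left h2 h1.le]
  rw [Real.exp_neg, inv_eq_one_div, div_le_iff₀ (Real.exp_pos x)]
  linarith

lemma exp_convex_bound {x t : ℝ} (hx0 : 0 ≤ x) (hx1 : x ≤ 1) :
    Real.exp (t * x) ≤ 1 + x * (Real.exp t - 1) := by
  have hconv := convexOn_exp.2 (Set.mem_univ (0:ℝ)) (Set.mem_univ t)
    (sub_nonneg.2 hx1) hx0 (by ring)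
  simp only [smul_eq_mul, mul_zero, zero_add, Real.exp_zero, mul_one] at hconv
  have : t * x = x * t := mul_comm _ _
  rw [this]
  linarith

theorem chernoff_mixed_bound
    {Ω : Type*} [MeasurableSpace Ω] (μ : Measure Ω) [IsProbabilityMeasure μ]
    {q : ℕ} (X : Fin q → Ω → ℝ)
    (hmeas : ∀ j, Measurable (X j))
    (hind : iIndepFun X μ)
    (hrange : ∀ j, ∀ ω, X j ω ∈ Set.Icc (0 : ℝ) 1)
    (γ A B : ℝ) (hγ : γ ∈ Set.Ioo (0 : ℝ) (1/2)) (hA : 0 ≤ A) (hB : 0 ≤ B)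
    (hE : (μ[fun ω => ∑ j, X j ω]) = (1 - γ) * A + γ * B) :
    (μ {ω | ∑ j, X j ω < (1 - 2*γ) * A}).toReal
      ≤ Real.exp (-(γ^3 / 2) * max B (A / 2)) := by
  obtain ⟨hγ0, hγ2⟩ := hγ
  rcases eq_or_lt_of_le hA with hA0 | hA0
  · -- A = 0 : the event is empty
    have hempty : {ω | ∑ j, X j ω < (1 - 2*γ) * A} = ∅ := by
      ext ω
      simp only [Set.mem_setOf_eq, Set.mem_empty_iff_false, iff_false, not_lt, ← hA0, mul_zero]
      exact Finset.sum_nonneg fun j _ => (hrange j ω).1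
    rw [hempty]
    simp [le_of_lt (Real.exp_pos _)]
  · -- main case A > 0
    set m : ℝ := (1 - γ) * A + γ * B with hm_def
    set T : ℝ := γ * (A + B) with hT_def
    have hm0 : 0 < m := by nlinarith
    have hT0 : 0 < T := by nlinarith
    set t : ℝ := -(T / m) with ht_def
    have ht_neg : t ≤ 0 := by
      rw [ht_def]
      exact neg_nonpos.2 (div_nonneg hT0.le hm0.le)
    set a : ℝ := (1 - 2*γ) * A with ha_def
    have hma : m - a = T := by rw [hm_def, ha_def, hT_def]; ring
    -- integrability
    have hint : ∀ j, Integrable (X j) μ := by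
      intro j
      refine (integrable_const (1:ℝ)).mono' (hmeas j).aestronglyMeasurable ?_
      filter_upwards with ω
      rw [Real.norm_eq_abs, abs_le]
      exact ⟨by linarith [(hrange j ω).1], (hrange j ω).2⟩
    have hint_exp : ∀ j, Integrable (fun ω => Real.exp (t * X j ω)) μ := by
      intro j
      refine (integrable_const (Real.exp |t|)).mono'
        ((hmeas j).const_mul t).exp.aestronglyMeasurable ?_
      filter_upwards with ω
      rw [Real.norm_eq_abs, abs_of_pos (Real.exp_pos _), Real.exp_le_exp]
      calc t * X j ω ≤ |t * X j ω| := le_abs_self _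
        _ = |t| * |X j ω| := abs_mul _ _
        _ ≤ |t| * 1 := by
            refine mul_le_mul_of_nonneg_left ?_ (abs_nonneg t)
            rw [abs_le]; exact ⟨by linarith [(hrange j ω).1], (hrange j ω).2⟩
        _ = |t| := mul_one _
    -- sum of means
    have hsum_mean : ∑ j, (μ[X j]) = m := by
      rw [← hE]
      exact (integral_finset_sum Finset.univ fun j _ => hint j).symm
    -- per-variable mgf bound
    have hmgf_le : ∀ j, mgf (X j) μ t ≤ Real.exp ((Real.exp t - 1) * (μ[X j])) := by
      intro j
      have hmono : mgf (X j) μ t ≤ 1 + (μ[X j]) * (Real.exp t - 1) := by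
        have h1 : mgf (X j) μ t ≤ μ[fun ω => 1 + X j ω * (Real.exp t - 1)] := by
          refine integral_mono (hint_exp j)
            ((integrable_const 1).add ((hint j).mul_const _)) ?_
          intro ω
          exact exp_convex_bound (hrange j ω).1 (hrange j ω).2
        have h2 : μ[fun ω => 1 + X j ω * (Real.exp t - 1)]
            = 1 + (μ[X j]) * (Real.exp t - 1) := by
          rw [integral_add (integrable_const 1) ((hint j).mul_const _),
            integral_const, integral_mul_const]
          simp
        linarith [h1, h2.symm.le]
      calc mgf (X j) μ t ≤ 1 + (μ[X j]) * (Real.exp t - 1) := hmono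
        _ ≤ Real.exp ((Real.exp t - 1) * (μ[X j])) := by
            have := Real.add_one_le_exp ((Real.exp t - 1) * (μ[X j]))
            linarith [this, mul_comm (μ[X j]) (Real.exp t - 1)]
    -- mgf of the sum
    have hmgf_sum : mgf (∑ j, X j) μ t ≤ Real.exp ((Real.exp t - 1) * m) := by
      rw [hind.mgf_sum hmeas]
      calc ∏ j, mgf (X j) μ t
          ≤ ∏ j, Real.exp ((Real.exp t - 1) * (μ[X j])) :=
            Finset.prod_le_prod (fun j _ => mgf_nonneg) (fun j _ => hmgf_le j)
        _ = Real.exp (∑ j, (Real.exp t - 1) * (μ[X j])) := (Real.exp_sum _ _).symm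
        _ = Real.exp ((Real.exp t - 1) * m) := by
            rw [← Finset.mul_sum, hsum_mean]
    -- Chernoff
    have hcher : (μ {ω | (∑ j, X j) ω ≤ a}).toReal
        ≤ Real.exp (-t * a) * mgf (∑ j, X j) μ t :=
      measure_le_le_exp_mul_mgf a ht_neg
        (hind.integrable_exp_mul_sum hmeas (fun j _ => hint_exp j))
    have hsub : (μ {ω | ∑ j, X j ω < a}).toReal
        ≤ (μ {ω | (∑ j, X j) ω ≤ a}).toReal := by
      refine ENNReal.toReal_mono (measure_ne_top μ _) (measure_mono ?_)
      intro ω hω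
      simp only [Set.mem_setOf_eq, Finset.sum_apply] at *
      exact hω.le
    -- numeric: bound the exponent
    have hexp_quad : Real.exp t ≤ 1 + t + t^2/2 := by
      have := exp_neg_le_quadratic (div_nonneg hT0.le hm0.le)
      rw [ht_def]
      calc Real.exp (-(T/m)) ≤ 1 - T/m + (T/m)^2/2 := this
        _ = 1 + (-(T/m)) + (-(T/m))^2/2 := by ring
    have hexponent : -t * a + (Real.exp t - 1) * m ≤ -(T^2 / (2*m)) := by
      have ha_pos : 0 ≤ a := by rw [ha_def]; nlinarith
      have h1 : (Real.exp t - 1) * m ≤ (t + t^2/2) * m := by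
        have : Real.exp t - 1 ≤ t + t^2/2 := by linarith
        exact mul_le_mul_of_nonneg_right this hm0.le
      have h2 : -t * a + (t + t^2/2) * m = t * (m - a) + m * t^2/2 := by ring
      have h3 : t * (m - a) + m * t^2/2 = -(T^2/m) + T^2/(2*m) := by
        rw [hma, ht_def]
        field_simp
      have h4 : -(T^2/m) + T^2/(2*m) = -(T^2/(2*m)) := by
        field_simp
        ring
      linarith
    have hfinal : -(T^2 / (2*m)) ≤ -(γ^3 / 2) * max B (A / 2) := by
      have hmax_le : max B (A/2) ≤ A + B := max_le (by linarith) (by linarith)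
      have hmax_nn : 0 ≤ max B (A/2) := le_max_of_le_right (by linarith)
      have hm_le : m ≤ A + B := by rw [hm_def]; nlinarith
      have key : γ^3/2 * (max B (A/2)) ≤ T^2/(2*m) := by
        rw [div_mul_eq_mul_div, div_le_div_iff₀ (by norm_num : (0:ℝ) < 2) (by positivity)]
        rw [hT_def]
        have hγ32 : γ^3 ≤ γ^2 := pow_le_pow_of_le_one hγ0.le (by linarith) (by norm_num)
        calc γ^3 * max B (A/2) * (2*m)
            ≤ γ^3 * (A+B) * (2*(A+B)) := by gcongr
          _ ≤ γ^2 * (A+B) * (2*(A+B)) := by gcongr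
          _ = (γ*(A+B))^2 * 2 := by ring
      linarith
    calc (μ {ω | ∑ j, X j ω < (1 - 2*γ) * A}).toReal
        ≤ (μ {ω | (∑ j, X j) ω ≤ a}).toReal := hsub
      _ ≤ Real.exp (-t * a) * mgf (∑ j, X j) μ t := hcher
      _ ≤ Real.exp (-t * a) * Real.exp ((Real.exp t - 1) * m) := by
          exact mul_le_mul_of_nonneg_left hmgf_sum (Real.exp_pos _).le
      _ = Real.exp (-t * a + (Real.exp t - 1) * m) := (Real.exp_add _ _).symm
      _ ≤ Real.exp (-(T^2 / (2*m))) := Real.exp_le_exp.2 hexponent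
      _ ≤ Real.exp (-(γ^3 / 2) * max B (A / 2)) := Real.exp_le_exp.2 hfinal
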